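/- (Mennicke–Newman lemma) Let R be a commutative ring with n ≥ 2 for which the stable range condition sr_{2n−2}(R) holds (equivalently, sdim(R) ≤ 2n−3). Let v, w ∈ Um_n(R). Then there exist ε, δ ∈ E_n(R) and elements x, y, a₂,…,aₙ ∈ R such that vε = (x, a₂,…,aₙ), wδ = (y, a₂,…,aₙ), and x + y = 1. -/

import Mathlib

/-- A row `v` of length `n` over a commutative ring is *unimodular* if there is a row `w`
with `∑ i, v i * w i = 1`. -/
def IsUnimodular {R : Type*} [CommRing R] {n : ℕ} (v : Fin n → R) : Prop :=
  ∃ w : Fin n → R, ∑ i, v i * w i = 1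

/-- `ε` lies in the elementary group `E_n(R)`, i.e. the (sub)group of `GL_n(R)` generated by
the elementary matrices `e_{ij}(λ) = I + λ E_{ij}` (`i ≠ j`).  Since the generating set is
closed under inverses, this coincides with the multiplicative closure. -/
def IsElementary {R : Type*} [CommRing R] {n : ℕ} (ε : Matrix (Fin n) (Fin n) R) : Prop :=
  ε ∈ Submonoid.closure {M : Matrix (Fin n) (Fin n) R |
    ∃ (i j : Fin n) (c : R), i ≠ j ∧ M = Matrix.transvection i j c}

/-- An `m × n` matrix is right invertible (i.e. lies in `Um_{m,n}(R)`) if it has a right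
inverse. -/
def RightInvertible {R : Type*} [CommRing R] {m n : ℕ} (A : Matrix (Fin m) (Fin n) R) : Prop :=
  ∃ B : Matrix (Fin n) (Fin m) R, A * B = 1

/-- The stable range condition `sr_k(R)`. -/
def SRCond (R : Type*) [CommRing R] (k : ℕ) : Prop :=
  ∀ a : Fin (k + 1) → R, IsUnimodular a →
    ∃ c : Fin k → R, IsUnimodular (fun i : Fin k => a i.castSucc + c i * a (Fin.last k))

open Matrix

lemma vecMul_transvection {R : Type*} [CommRing R] {n : ℕ} (v : Fin n → R) (i j : Fin n) (c : R) :
    Matrix.vecMul v (Matrix.transvection i j c) = fun l => v l + if l = j then c * v i else 0 := by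
  funext l
  simp only [Matrix.transvection, Matrix.vecMul, dotProduct, Matrix.add_apply,
    Matrix.one_apply, Matrix.single, mul_add, Finset.sum_add_distrib, mul_ite, ite_and,
    mul_one, mul_zero, of_apply]
  congr 1
  · simp [Finset.sum_ite_eq', eq_comm]
  · simp only [eq_comm (a := i)]
    rw [Finset.sum_ite_eq' Finset.univ i (fun x => if j = l then v x * c else 0)]
    simp [eq_comm, mul_comm]

lemma isElementary_one {R : Type*} [CommRing R] {n : ℕ} :
    IsElementary (1 : Matrix (Fin n) (Fin n) R) := Submonoid.one_mem _

lemma isElementary_mul {R : Type*} [CommRing R] {n : ℕ} {ε δ : Matrix (Fin n) (Fin n) R}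
    (h1 : IsElementary ε) (h2 : IsElementary δ) : IsElementary (ε * δ) :=
  Submonoid.mul_mem _ h1 h2

lemma isElementary_transvection {R : Type*} [CommRing R] {n : ℕ} {i j : Fin n} (hij : i ≠ j)
    (c : R) : IsElementary (Matrix.transvection i j c) :=
  Submonoid.subset_closure ⟨i, j, c, hij, rfl⟩

/-- add `c j * v i` to each coordinate `j` (where `c i = 0`). -/
lemma exists_elem_addRow {R : Type*} [CommRing R] {n : ℕ} (i : Fin n) (c : Fin n → R)
    (hci : c i = 0) :
    ∃ ε : Matrix (Fin n) (Fin n) R, IsElementary ε ∧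
      ∀ v : Fin n → R, Matrix.vecMul v ε = fun j => v j + c j * v i := by
  have key : ∀ s : Finset (Fin n), ∀ c : Fin n → R, c i = 0 → (∀ j ∉ s, c j = 0) →
      ∃ ε : Matrix (Fin n) (Fin n) R, IsElementary ε ∧
        ∀ v : Fin n → R, Matrix.vecMul v ε = fun j => v j + c j * v i := by
    intro s
    induction s using Finset.induction_on with
    | empty =>
      intro c hci h
      exact ⟨1, isElementary_one, fun v => by
        funext j; simp [Matrix.vecMul_one, h j (Finset.notMem_empty j)]⟩
    | @insert a s ha ih =>
      intro c hci h
      by_cases hai : a = i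
      · exact ih c hci (fun j hj => by
          by_cases hja : j = a
          · subst hja; rw [hai]; exact hci
          · exact h j (by simp [hj, hja]))
      obtain ⟨ε, hε, hεv⟩ := ih (Function.update c a 0)
        (by rw [Function.update_of_ne (fun h' => hai h'.symm)]; exact hci)
        (fun j hj => by
          by_cases hja : j = a
          · subst hja; simp
          · rw [Function.update_of_ne hja]; exact h j (by simp [hj, hja]))
      refine ⟨ε * Matrix.transvection i a (c a),
        isElementary_mul hε (isElementary_transvection (fun h' => hai h'.symm) _), fun v => ?_⟩
      rw [← Matrix.vecMul_vecMul, hεv, vecMul_transvection]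
      funext j
      by_cases hja : j = a
      · subst hja
        simp [Function.update_self, Function.update_of_ne (fun h' => hai h'.symm), hci]
      · simp [hja, Function.update_of_ne hja]
  exact key Finset.univ c hci (fun j hj => absurd (Finset.mem_univ j) hj)

/-- add `∑ j, c j * v j` to coordinate `i` (where `c i = 0`). -/
lemma exists_elem_addHead {R : Type*} [CommRing R] {n : ℕ} (i : Fin n) (c : Fin n → R)
    (hci : c i = 0) :
    ∃ ε : Matrix (Fin n) (Fin n) R, IsElementary ε ∧
      ∀ v : Fin n → R, Matrix.vecMul v ε = Function.update v i (v i + ∑ j, c j * v j) := by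
  have key : ∀ s : Finset (Fin n), ∀ c : Fin n → R, c i = 0 → (∀ j ∉ s, c j = 0) →
      ∃ ε : Matrix (Fin n) (Fin n) R, IsElementary ε ∧
        ∀ v : Fin n → R, Matrix.vecMul v ε = Function.update v i (v i + ∑ j, c j * v j) := by
    intro s
    induction s using Finset.induction_on with
    | empty =>
      intro c hci h
      refine ⟨1, isElementary_one, fun v => by
        have : ∀ j, c j = 0 := fun j => h j (Finset.notMem_empty j)
        funext j
        simp [Matrix.vecMul_one, this, Function.update_apply]
        intro hji; subst hji; rfl⟩
    | @insert a s ha ih =>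
      intro c hci h
      by_cases hai : a = i
      · exact ih c hci (fun j hj => by
          by_cases hja : j = a
          · subst hja; rw [hai]; exact hci
          · exact h j (by simp [hj, hja]))
      obtain ⟨ε, hε, hεv⟩ := ih (Function.update c a 0)
        (by rw [Function.update_of_ne (fun h' => hai h'.symm)]; exact hci)
        (fun j hj => by
          by_cases hja : j = a
          · subst hja; simp
          · rw [Function.update_of_ne hja]; exact h j (by simp [hj, hja]))
      refine ⟨ε * Matrix.transvection a i (c a),
        isElementary_mul hε (isElementary_transvection hai _), fun v => ?_⟩
      rw [← Matrix.vecMul_vecMul, hεv, vecMul_transvection]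
      funext j
      by_cases hji : j = i
      · subst hji
        simp only [Function.update_self, if_pos rfl]
        rw [Function.update_of_ne hai]
        have hsum : ∑ x, Function.update c a 0 x * v x = (∑ x, c x * v x) - c a * v a := by
          have : ∀ x, Function.update c a 0 x * v x
              = Function.update (fun x => c x * v x) a 0 x := by
            intro x
            by_cases hxa : x = a
            · subst hxa; simp
            · simp [Function.update_of_ne hxa]
          rw [Finset.sum_congr rfl (fun x _ => this x), Finset.sum_update_of_mem (Finset.mem_univ a)]
          rw [Finset.sum_eq_sum_sdiff_singleton_add (Finset.mem_univ a) (fun x => c x * v x)]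
          ring
        rw [hsum]; simp only [if_true]; ring
      · simp [hji, Function.update_of_ne hji]
  exact key Finset.univ c hci (fun j hj => absurd (Finset.mem_univ j) hj)

lemma mulsum {R : Type*} [CommRing R] {k : ℕ} (r : R) (f g : Fin k → R) :
    ∑ j, (r * f j) * g j = r * ∑ j, g j * f j := by
  rw [Finset.mul_sum]; exact Finset.sum_congr rfl fun j _ => by ring

/-- **Mennicke–Newman lemma** (van der Kallen, Lemma 3.2).  Let `R` be a commutative ring,
`n = k + 1 ≥ 2`, satisfying the stable range condition `sr_{2n−2}(R)` (equivalently
`sdim R ≤ 2n − 3`).  For `v, w ∈ Um_n(R)` there are `ε, δ ∈ E_n(R)` with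
`vε = (x, a₂,…,aₙ)`, `wδ = (y, a₂,…,aₙ)` and `x + y = 1`. -/
theorem mennicke_newman {R : Type*} [CommRing R]
    (k : ℕ) (hk : 1 ≤ k) (hsr : SRCond R (2 * (k + 1) - 2))
    (v w : Fin (k + 1) → R) (hv : IsUnimodular v) (hw : IsUnimodular w) :
    ∃ (ε δ : Matrix (Fin (k + 1)) (Fin (k + 1)) R) (x y : R) (a : Fin k → R),
      IsElementary ε ∧ IsElementary δ ∧
      Matrix.vecMul v ε = Fin.cons x a ∧ Matrix.vecMul w δ = Fin.cons y a ∧ x + y = 1 := by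
  obtain ⟨p, hp⟩ := hv
  obtain ⟨q, hq⟩ := hw
  have hsr' : SRCond R (k + k) := by
    have h2 : 2 * (k + 1) - 2 = k + k := by omega
    rwa [h2] at hsr
  have hp' : v 0 * p 0 + ∑ j : Fin k, v j.succ * p j.succ = 1 := by
    rw [← hp, Fin.sum_univ_succ]
  have hq' : w 0 * q 0 + ∑ j : Fin k, w j.succ * q j.succ = 1 := by
    rw [← hq, Fin.sum_univ_succ]
  set a0 : Fin (k + k + 1) → R :=
    Fin.snoc (Fin.append (fun j : Fin k => v j.succ) (fun j : Fin k => w j.succ))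
      (v 0 * w 0) with ha0def
  have ha0 : IsUnimodular a0 := by
    refine ⟨Fin.snoc (Fin.append (fun j : Fin k => p j.succ)
      (fun j : Fin k => v 0 * p 0 * q j.succ)) (p 0 * q 0), ?_⟩
    rw [Fin.sum_univ_castSucc]
    simp only [ha0def, Fin.snoc_castSucc, Fin.snoc_last]
    rw [Fin.sum_univ_add]
    simp only [Fin.append_left, Fin.append_right]
    have e2 : ∑ j : Fin k, w j.succ * (v 0 * p 0 * q j.succ)
        = v 0 * p 0 * ∑ j : Fin k, w j.succ * q j.succ := by
      rw [Finset.mul_sum]; exact Finset.sum_congr rfl fun j _ => by ring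
    rw [e2]
    linear_combination hp' + (v 0 * p 0) * hq'
  obtain ⟨c, hc⟩ := hsr' a0 ha0
  obtain ⟨d, hd⟩ := hc
  simp only [ha0def, Fin.snoc_castSucc, Fin.snoc_last] at hd
  rw [Fin.sum_univ_add] at hd
  simp only [Fin.append_left, Fin.append_right] at hd
  -- elementary ops adding multiples of the head to tails
  obtain ⟨ε₁, hε₁, hε₁v⟩ := exists_elem_addRow (0 : Fin (k + 1))
    (Fin.cons 0 (fun j : Fin k => c (Fin.castAdd k j) * w 0)) (by simp)
  obtain ⟨δ₁, hδ₁, hδ₁v⟩ := exists_elem_addRow (0 : Fin (k + 1))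
    (Fin.cons 0 (fun j : Fin k => c (Fin.natAdd k j) * v 0)) (by simp)
  set v1 : Fin (k + 1) → R := Matrix.vecMul v ε₁ with hv1
  set w1 : Fin (k + 1) → R := Matrix.vecMul w δ₁ with hw1
  have hv1_0 : v1 0 = v 0 := by rw [hv1, hε₁v]; simp
  have hw1_0 : w1 0 = w 0 := by rw [hw1, hδ₁v]; simp
  have hv1_s : ∀ j : Fin k, v1 j.succ = v j.succ + c (Fin.castAdd k j) * w 0 * v 0 := by
    intro j; rw [hv1, hε₁v]; simp [Fin.cons_succ]
  have hw1_s : ∀ j : Fin k, w1 j.succ = w j.succ + c (Fin.natAdd k j) * v 0 * w 0 := by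
    intro j; rw [hw1, hδ₁v]; simp [Fin.cons_succ]
  have hsum : (∑ j : Fin k, v1 j.succ * d (Fin.castAdd k j))
      + (∑ j : Fin k, w1 j.succ * d (Fin.natAdd k j)) = 1 := by
    rw [← hd]
    congr 1
    · exact Finset.sum_congr rfl fun j _ => by rw [hv1_s j]; ring
    · exact Finset.sum_congr rfl fun j _ => by rw [hw1_s j]; ring
  -- fix heads so that they sum to 1
  obtain ⟨ε₂, hε₂, hε₂v⟩ := exists_elem_addHead (0 : Fin (k + 1))
    (Fin.cons 0 (fun j : Fin k => (1 - v 0 - w 0) * d (Fin.castAdd k j))) (by simp)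
  obtain ⟨δ₂, hδ₂, hδ₂v⟩ := exists_elem_addHead (0 : Fin (k + 1))
    (Fin.cons 0 (fun j : Fin k => (1 - v 0 - w 0) * d (Fin.natAdd k j))) (by simp)
  set v2 : Fin (k + 1) → R := Matrix.vecMul v1 ε₂ with hv2
  set w2 : Fin (k + 1) → R := Matrix.vecMul w1 δ₂ with hw2
  set x : R := v 0 + (1 - v 0 - w 0) * ∑ j : Fin k, v1 j.succ * d (Fin.castAdd k j) with hx
  set y : R := w 0 + (1 - v 0 - w 0) * ∑ j : Fin k, w1 j.succ * d (Fin.natAdd k j) with hy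
  have hxy : x + y = 1 := by
    rw [hx, hy]
    linear_combination (1 - v 0 - w 0) * hsum
  have hv2eq : v2 = Function.update v1 0 x := by
    rw [hv2, hε₂v]
    rw [hv1_0, Fin.sum_univ_succ]
    simp only [Fin.cons_zero, Fin.cons_succ, zero_mul, zero_add]
    rw [hx, mulsum]
  have hw2eq : w2 = Function.update w1 0 y := by
    rw [hw2, hδ₂v]
    rw [hw1_0, Fin.sum_univ_succ]
    simp only [Fin.cons_zero, Fin.cons_succ, zero_mul, zero_add]
    rw [hy, mulsum]
  have hv2_0 : v2 0 = x := by rw [hv2eq]; simp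
  have hw2_0 : w2 0 = y := by rw [hw2eq]; simp
  have hv2_s : ∀ j : Fin k, v2 j.succ = v1 j.succ := by
    intro j; rw [hv2eq, Function.update_of_ne (Fin.succ_ne_zero j)]
  have hw2_s : ∀ j : Fin k, w2 j.succ = w1 j.succ := by
    intro j; rw [hw2eq, Function.update_of_ne (Fin.succ_ne_zero j)]
  -- equalize tails
  obtain ⟨ε₃, hε₃, hε₃v⟩ := exists_elem_addRow (0 : Fin (k + 1))
    (Fin.cons 0 (fun j : Fin k => w1 j.succ - v1 j.succ)) (by simp)
  obtain ⟨δ₃, hδ₃, hδ₃v⟩ := exists_elem_addRow (0 : Fin (k + 1))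
    (Fin.cons 0 (fun j : Fin k => v1 j.succ - w1 j.succ)) (by simp)
  refine ⟨ε₁ * ε₂ * ε₃, δ₁ * δ₂ * δ₃, x, y,
    (fun j : Fin k => v1 j.succ + (w1 j.succ - v1 j.succ) * x),
    isElementary_mul (isElementary_mul hε₁ hε₂) hε₃,
    isElementary_mul (isElementary_mul hδ₁ hδ₂) hδ₃, ?_, ?_, hxy⟩
  · rw [← Matrix.vecMul_vecMul, ← Matrix.vecMul_vecMul, ← hv1, ← hv2, hε₃v]
    funext j
    refine Fin.cases ?_ (fun j => ?_) j
    · simp [hv2_0]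
    · simp only [Fin.cons_succ, hv2_s, hv2_0]
  · rw [← Matrix.vecMul_vecMul, ← Matrix.vecMul_vecMul, ← hw1, ← hw2, hδ₃v]
    funext j
    refine Fin.cases ?_ (fun j => ?_) j
    · simp [hw2_0]
    · simp only [Fin.cons_succ, hw2_s, hw2_0]
      linear_combination (v1 j.succ - w1 j.succ) * hxy
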